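/- For n ∈ ℕ and 0 ≤ k ≤ n−1, the norms ‖·‖'_{Han_k} and ‖·‖_{Z⊙P_{d,k}⊙P_{d,n-k-1}} on P_{d,n} are dual to each other with respect to the Cauchy pairing; in particular ‖q‖'_{Han_k} = sup{|⟨h,q⟩₂| : h ∈ P_{d,n}, ‖h‖_{Z⊙P_{d,k}⊙P_{d,n-k-1}} ≤ 1} for all q ∈ P_{d,n}. -/

import Mathlib

noncomputable section
open scoped ComplexOrder
namespace WP

abbrev MvP (d : ℕ) := MvPolynomial (Fin d) ℂ

/-- The Cauchy pairing `⟨p,q⟩₂ = ∑_α a_α conj(b_α)` of coefficient vectors. -/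
def pairing {d : ℕ} (p q : MvP d) : ℂ :=
  ∑ α ∈ p.support, p.coeff α * (starRingEnd ℂ) (q.coeff α)

/-- The Hardy norm `‖p‖₂`: the `ℓ²` norm of the coefficient vector. -/
def norm2 {d : ℕ} (p : MvP d) : ℝ :=
  Real.sqrt (∑ α ∈ p.support, ‖p.coeff α‖ ^ 2)

/-- The weak product norm `‖p‖_{P_{d,k} ⊙ P_{d,l}}`. -/
def wpNorm (d k l : ℕ) (p : MvP d) : ℝ :=
  sInf {x : ℝ | ∃ (m : ℕ) (f g : Fin m → MvP d),
    (∀ j, (f j).IsHomogeneous k) ∧ (∀ j, (g j).IsHomogeneous l) ∧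
    p = ∑ j, f j * g j ∧ x = ∑ j, norm2 (f j) * norm2 (g j)}

/-- The weak product norm `‖p‖_{Z_d ⊙ P_{d,k} ⊙ P_{d,l}}`. -/
def zwpNorm (d k l : ℕ) (p : MvP d) : ℝ :=
  sInf {x : ℝ | ∃ f : Fin d → MvP d,
    (∀ i, (f i).IsHomogeneous (k + l)) ∧
    p = ∑ i, MvPolynomial.X i * f i ∧ x = ∑ i, wpNorm d k l (f i)}

/-- `|||p|||₁ = max_{0 ≤ k ≤ n} ‖p‖_{P_{d,k} ⊙ P_{d,n-k}}`. -/
def triple1 (d n : ℕ) (p : MvP d) : ℝ :=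
  ⨆ k : Fin (n + 1), wpNorm d k (n - k) p

/-- `|||p|||₂ = max_{0 ≤ k ≤ n-1} ‖p‖_{Z_d ⊙ P_{d,k} ⊙ P_{d,n-k-1}}`. -/
def triple2 (d n : ℕ) (p : MvP d) : ℝ :=
  ⨆ k : Fin n, zwpNorm d k (n - 1 - k) p

/-- `f̂`: the polynomial whose coefficients are the conjugates of those of `f`. -/
def hatp {d : ℕ} (f : MvP d) : MvP d := MvPolynomial.map (starRingEnd ℂ) f

/-- The Hankel norm `‖q‖'_{Han_k} = max_{1 ≤ i ≤ d} ‖Γ_q M_{z_i}|_{P_{d,k}}‖` for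
`q ∈ P_{d,n}`, computed via `⟨Γ_q (z_i f), g⟩₂ = ⟨q, z_i f̂ g⟩₂`. -/
def hanNorm' (d n k : ℕ) (q : MvP d) : ℝ :=
  sSup {x : ℝ | ∃ (i : Fin d) (f g : MvP d), f.IsHomogeneous k ∧
    g.IsHomogeneous (n - k - 1) ∧ norm2 f ≤ 1 ∧ norm2 g ≤ 1 ∧
    x = ‖pairing q (MvPolynomial.X i * hatp f * g)‖}
section Lemmas
open MvPolynomial Finsupp Finset
variable {d : ℕ}

local notation "conj'" => starRingEnd ℂ

lemma pairing_eq_sum {p q : MvP d} {s : Finset (Fin d →₀ ℕ)} (hs : p.support ⊆ s) :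
    pairing p q = ∑ α ∈ s, p.coeff α * conj' (q.coeff α) :=
  Finset.sum_subset hs (fun α _ hα => by
    rw [MvPolynomial.notMem_support_iff.mp hα, zero_mul])

@[simp] lemma pairing_zero_left (q : MvP d) : pairing 0 q = 0 := by
  simp [pairing]

@[simp] lemma pairing_zero_right (p : MvP d) : pairing p 0 = 0 := by
  simp [pairing]

lemma pairing_conj (p q : MvP d) : pairing p q = conj' (pairing q p) := by
  rw [pairing_eq_sum (Finset.subset_union_left : p.support ⊆ p.support ∪ q.support),
    pairing_eq_sum (Finset.subset_union_right : q.support ⊆ p.support ∪ q.support),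
    map_sum]
  refine Finset.sum_congr rfl fun α _ => ?_
  simp only [map_mul, RingHomCompTriple.comp_apply, Complex.conj_conj, RingHom.id_apply]
  ring

lemma norm_pairing_comm (p q : MvP d) : ‖pairing p q‖ = ‖pairing q p‖ := by
  rw [pairing_conj]; exact RCLike.norm_conj _

lemma pairing_smul_right (p q : MvP d) (c : ℂ) :
    pairing p (c • q) = conj' c * pairing p q := by
  simp only [pairing, MvPolynomial.coeff_smul, map_mul, Finset.mul_sum, smul_eq_mul]
  refine Finset.sum_congr rfl fun α _ => by ring

lemma pairing_sum_right (p : MvP d) {ι : Type*} (s : Finset ι) (w : ι → MvP d) :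
    pairing p (∑ j ∈ s, w j) = ∑ j ∈ s, pairing p (w j) := by
  simp only [pairing, MvPolynomial.coeff_sum, map_sum, Finset.mul_sum]
  exact Finset.sum_comm

lemma pairing_add_left (p₁ p₂ q : MvP d) :
    pairing (p₁ + p₂) q = pairing p₁ q + pairing p₂ q := by
  rw [pairing_eq_sum (s := p₁.support ∪ p₂.support ∪ (p₁ + p₂).support)
      (Finset.subset_union_right),
    pairing_eq_sum (s := p₁.support ∪ p₂.support ∪ (p₁ + p₂).support)
      (Finset.subset_union_left.trans Finset.subset_union_left),
    pairing_eq_sum (s := p₁.support ∪ p₂.support ∪ (p₁ + p₂).support)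
      (Finset.subset_union_right.trans Finset.subset_union_left),
    ← Finset.sum_add_distrib]
  refine Finset.sum_congr rfl fun α _ => ?_
  rw [MvPolynomial.coeff_add]; ring

lemma pairing_sum_left {ι : Type*} (s : Finset ι) (w : ι → MvP d) (q : MvP d) :
    pairing (∑ j ∈ s, w j) q = ∑ j ∈ s, pairing (w j) q := by
  classical
  induction s using Finset.induction_on with
  | empty => simp
  | @insert j s' hj ih => rw [Finset.sum_insert hj, Finset.sum_insert hj,
      pairing_add_left, ih]

end Lemmas
section Lemmas2
open MvPolynomial Finsupp Finset
variable {d : ℕ}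

local notation "conj'" => starRingEnd ℂ

lemma norm2_eq_sum {p : MvP d} {s : Finset (Fin d →₀ ℕ)} (hs : p.support ⊆ s) :
    norm2 p = Real.sqrt (∑ α ∈ s, ‖p.coeff α‖ ^ 2) := by
  unfold norm2
  congr 1
  exact Finset.sum_subset hs (fun α _ hα => by
    rw [MvPolynomial.notMem_support_iff.mp hα]; simp)

lemma norm2_nonneg (p : MvP d) : 0 ≤ norm2 p := Real.sqrt_nonneg _

lemma norm2_sq (p : MvP d) : norm2 p ^ 2 = ∑ α ∈ p.support, ‖p.coeff α‖ ^ 2 :=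
  Real.sq_sqrt (Finset.sum_nonneg fun _ _ => sq_nonneg _)

@[simp] lemma norm2_zero : norm2 (0 : MvP d) = 0 := by simp [norm2]

lemma norm2_eq_zero {p : MvP d} (h : norm2 p = 0) : p = 0 := by
  have h2 : ∑ α ∈ p.support, ‖p.coeff α‖ ^ 2 = 0 := by
    have := norm2_sq p; rw [h] at this; simpa using this.symm
  rw [Finset.sum_eq_zero_iff_of_nonneg (fun _ _ => sq_nonneg _)] at h2
  ext α
  by_cases hα : α ∈ p.support
  · have := h2 α hα
    rw [pow_eq_zero_iff two_ne_zero, norm_eq_zero] at this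
    simpa using this
  · simpa using MvPolynomial.notMem_support_iff.mp hα

lemma norm2_pos {p : MvP d} (h : p ≠ 0) : 0 < norm2 p :=
  lt_of_le_of_ne (norm2_nonneg p) (fun h0 => h (norm2_eq_zero h0.symm))

lemma norm2_smul (c : ℂ) (p : MvP d) : norm2 (c • p) = ‖c‖ * norm2 p := by
  have hs : (c • p).support ⊆ p.support := by
    intro α hα
    simp only [MvPolynomial.mem_support_iff, MvPolynomial.coeff_smul] at hα ⊢
    exact fun h0 => hα (by simp [h0])
  rw [norm2_eq_sum hs]
  unfold norm2
  rw [← Real.sqrt_sq (norm_nonneg c), ← Real.sqrt_mul (sq_nonneg _), Finset.mul_sum]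
  congr 1
  refine Finset.sum_congr rfl fun α _ => ?_
  rw [MvPolynomial.coeff_smul, smul_eq_mul, norm_mul, mul_pow]

@[simp] lemma coeff_hatp (f : MvP d) (α : Fin d →₀ ℕ) :
    (hatp f).coeff α = conj' (f.coeff α) := MvPolynomial.coeff_map _ _ _

lemma hatp_support (f : MvP d) : (hatp f).support = f.support := by
  ext α; simp [MvPolynomial.mem_support_iff]

@[simp] lemma hatp_hatp (f : MvP d) : hatp (hatp f) = f := by
  ext α; simp

lemma norm2_hatp (f : MvP d) : norm2 (hatp f) = norm2 f := by
  unfold norm2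
  rw [hatp_support]
  congr 1
  exact Finset.sum_congr rfl fun α _ => by simp

lemma hatp_smul (c : ℂ) (f : MvP d) : hatp (c • f) = conj' c • hatp f := by
  ext α; simp [MvPolynomial.coeff_smul]

lemma isHomogeneous_coeff_degree {p : MvP d} {n : ℕ} (hp : p.IsHomogeneous n)
    {α : Fin d →₀ ℕ} (hα : α ∈ p.support) : α.degree = n := by
  rw [Finsupp.degree_eq_weight_one]
  exact hp (MvPolynomial.mem_support_iff.mp hα)

lemma hatp_isHomogeneous {f : MvP d} {n : ℕ} (hf : f.IsHomogeneous n) :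
    (hatp f).IsHomogeneous n := by
  intro α hα
  refine hf ?_
  simp only [coeff_hatp, ne_eq, map_eq_zero] at hα
  exact hα

lemma isHomogeneous_smul {f : MvP d} {n : ℕ} (c : ℂ) (hf : f.IsHomogeneous n) :
    (c • f).IsHomogeneous n := by
  intro α hα
  refine hf ?_
  intro h0
  rw [MvPolynomial.coeff_smul, h0, smul_zero] at hα
  exact hα rfl

end Lemmas2
section Lemmas3
open MvPolynomial Finsupp Finset
variable {d : ℕ}

local notation "conj'" => starRingEnd ℂ

/-- ℓ¹ norm of coefficients. -/
def L1 (p : MvP d) : ℝ := ∑ α ∈ p.support, ‖p.coeff α‖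

lemma L1_eq_sum {p : MvP d} {s : Finset (Fin d →₀ ℕ)} (hs : p.support ⊆ s) :
    L1 p = ∑ α ∈ s, ‖p.coeff α‖ :=
  Finset.sum_subset hs (fun α _ hα => by
    rw [MvPolynomial.notMem_support_iff.mp hα]; simp)

lemma L1_nonneg (p : MvP d) : 0 ≤ L1 p :=
  Finset.sum_nonneg fun _ _ => norm_nonneg _

@[simp] lemma L1_zero : L1 (0 : MvP d) = 0 := by simp [L1]

lemma coeff_norm_le_L1 (p : MvP d) (α : Fin d →₀ ℕ) : ‖p.coeff α‖ ≤ L1 p := by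
  by_cases hα : α ∈ p.support
  · exact Finset.single_le_sum (f := fun β => ‖p.coeff β‖) (fun _ _ => norm_nonneg _) hα
  · rw [MvPolynomial.notMem_support_iff.mp hα]
    simpa using L1_nonneg p

lemma L1_add_le (p q : MvP d) : L1 (p + q) ≤ L1 p + L1 q := by
  rw [L1_eq_sum (s := p.support ∪ q.support) MvPolynomial.support_add,
    L1_eq_sum (s := p.support ∪ q.support) (Finset.subset_union_left (s₂ := q.support)),
    L1_eq_sum (s := p.support ∪ q.support) (Finset.subset_union_right (s₁ := p.support)),
    ← Finset.sum_add_distrib]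
  refine Finset.sum_le_sum fun α _ => ?_
  rw [MvPolynomial.coeff_add]
  exact norm_add_le _ _

lemma L1_sum_le {ι : Type*} (s : Finset ι) (F : ι → MvP d) :
    L1 (∑ j ∈ s, F j) ≤ ∑ j ∈ s, L1 (F j) := by
  classical
  induction s using Finset.induction_on with
  | empty => simp
  | @insert j s' hj ih =>
    rw [Finset.sum_insert hj, Finset.sum_insert hj]
    exact (L1_add_le _ _).trans (by linarith)

lemma L1_monomial_le (α : Fin d →₀ ℕ) (c : ℂ) : L1 (monomial α c) ≤ ‖c‖ := by
  by_cases hc : c = 0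
  · simp [hc]
  · rw [L1, MvPolynomial.support_monomial, if_neg hc, Finset.sum_singleton,
      MvPolynomial.coeff_monomial, if_pos rfl]

lemma L1_monomial_mul_le (α : Fin d →₀ ℕ) (c : ℂ) (q : MvP d) :
    L1 (monomial α c * q) ≤ ‖c‖ * L1 q := by
  conv_lhs => rw [← MvPolynomial.support_sum_monomial_coeff q, Finset.mul_sum]
  refine (L1_sum_le _ _).trans ?_
  rw [L1, Finset.mul_sum]
  refine Finset.sum_le_sum fun β _ => ?_
  rw [MvPolynomial.monomial_mul]
  exact (L1_monomial_le _ _).trans (by rw [norm_mul])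

lemma L1_mul_le (p q : MvP d) : L1 (p * q) ≤ L1 p * L1 q := by
  conv_lhs => rw [← MvPolynomial.support_sum_monomial_coeff p, Finset.sum_mul]
  refine (L1_sum_le _ _).trans ?_
  rw [L1, Finset.sum_mul]
  exact Finset.sum_le_sum fun α _ => L1_monomial_mul_le _ _ _

lemma L1_X_le (i : Fin d) : L1 (X i : MvP d) ≤ 1 := by
  rw [MvPolynomial.X]
  simpa using L1_monomial_le (Finsupp.single i 1) (1 : ℂ)

lemma L1_hatp (f : MvP d) : L1 (hatp f) = L1 f := by
  unfold L1
  rw [hatp_support]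
  exact Finset.sum_congr rfl fun α _ => by simp

lemma norm_pairing_le_L1 (p q : MvP d) : ‖pairing p q‖ ≤ L1 p * L1 q := by
  refine (norm_sum_le _ _).trans ?_
  rw [L1, Finset.sum_mul]
  refine Finset.sum_le_sum fun α _ => ?_
  rw [norm_mul, RCLike.norm_conj]
  exact mul_le_mul_of_nonneg_left (coeff_norm_le_L1 q α) (norm_nonneg _)

lemma L1_le_sqrt_card (p : MvP d) :
    L1 p ≤ Real.sqrt (p.support.card) * norm2 p := by
  have h := Finset.sum_mul_sq_le_sq_mul_sq p.support (fun _ => (1:ℝ))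
    (fun α => ‖p.coeff α‖)
  simp only [one_mul, one_pow, Finset.sum_const, nsmul_eq_mul, mul_one] at h
  have h1 : L1 p ^ 2 ≤ (p.support.card : ℝ) * (norm2 p ^ 2) := by
    rw [norm2_sq]; exact h
  have h2 : L1 p ≤ Real.sqrt ((p.support.card : ℝ) * norm2 p ^ 2) := by
    rw [← Real.sqrt_sq (L1_nonneg p)]
    exact Real.sqrt_le_sqrt h1
  refine h2.trans (le_of_eq ?_)
  rw [Real.sqrt_mul (by positivity), Real.sqrt_sq (norm2_nonneg p)]

/-- the finite set of exponents of degree ≤ m -/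
def degF (d m : ℕ) : Finset (Fin d →₀ ℕ) :=
  (Finsupp.finite_of_degree_le (σ := Fin d) m).toFinset

lemma support_subset_degF {p : MvP d} {m : ℕ} (hp : p.IsHomogeneous m) :
    p.support ⊆ degF d m := by
  intro α hα
  simp only [degF, Set.Finite.mem_toFinset, Set.mem_setOf_eq]
  exact le_of_eq (isHomogeneous_coeff_degree hp hα)

lemma L1_le_of_homog {p : MvP d} {m : ℕ} (hp : p.IsHomogeneous m) :
    L1 p ≤ Real.sqrt ((degF d m).card) * norm2 p := by
  refine (L1_le_sqrt_card p).trans ?_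
  refine mul_le_mul_of_nonneg_right ?_ (norm2_nonneg p)
  exact Real.sqrt_le_sqrt (by
    exact_mod_cast Finset.card_le_card (support_subset_degF hp))

end Lemmas3
section Lemmas4
open MvPolynomial Finsupp Finset
variable {d : ℕ}

lemma degree_add' (a b : Fin d →₀ ℕ) : (a + b).degree = a.degree + b.degree := by
  simp [Finsupp.degree_eq_weight_one, map_add]

lemma degree_single' (i : Fin d) : (Finsupp.single i 1).degree = 1 := by
  exact Finsupp.degree_single i 1

lemma exists_nonzero_coord {β : Fin d →₀ ℕ} (hβ : β.degree ≠ 0) : ∃ i, β i ≠ 0 := by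
  by_contra h
  push_neg at h
  exact hβ (by rw [Finsupp.degree_eq_zero_iff]; ext i; simpa using h i)

lemma single_add_sub {β : Fin d →₀ ℕ} {i : Fin d} (hi : β i ≠ 0) :
    Finsupp.single i 1 + (β - Finsupp.single i 1) = β := by
  rw [add_tsub_cancel_of_le (Finsupp.single_le_iff.mpr (Nat.one_le_iff_ne_zero.mpr hi))]

lemma degree_sub_single {β : Fin d →₀ ℕ} {i : Fin d} (hi : β i ≠ 0) :
    (β - Finsupp.single i 1).degree + 1 = β.degree := by
  conv_rhs => rw [← single_add_sub hi]
  rw [degree_add', degree_single']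
  ring

lemma exists_degree_split (k l : ℕ) (β : Fin d →₀ ℕ) (hβ : β.degree = k + l) :
    ∃ γ δ : Fin d →₀ ℕ, β = γ + δ ∧ γ.degree = k ∧ δ.degree = l := by
  induction k generalizing β with
  | zero => exact ⟨0, β, by simp, map_zero Finsupp.degree, by simpa using hβ⟩
  | succ k ih =>
    obtain ⟨i, hi⟩ := exists_nonzero_coord (β := β) (by omega)
    obtain ⟨γ', δ, hsum, hγ, hδ⟩ := ih (β - Finsupp.single i 1) (by
      have := degree_sub_single hi; omega)
    refine ⟨Finsupp.single i 1 + γ', δ, ?_, ?_, hδ⟩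
    · rw [add_assoc, ← hsum, single_add_sub hi]
    · rw [degree_add', degree_single', hγ]; ring

/-- existence of a weak-product representation for homogeneous polynomials -/
lemma wpSet_nonempty {k l : ℕ} {p : MvP d} (hp : p.IsHomogeneous (k + l)) :
    {x : ℝ | ∃ (m : ℕ) (f g : Fin m → MvP d),
      (∀ j, (f j).IsHomogeneous k) ∧ (∀ j, (g j).IsHomogeneous l) ∧
      p = ∑ j, f j * g j ∧ x = ∑ j, norm2 (f j) * norm2 (g j)}.Nonempty := by
  classical
  have hsplit : ∀ s : {a // a ∈ p.support}, ∃ γ δ : Fin d →₀ ℕ,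
      (s : Fin d →₀ ℕ) = γ + δ ∧ γ.degree = k ∧ δ.degree = l :=
    fun s => exists_degree_split k l s (isHomogeneous_coeff_degree hp s.2)
  choose γ δ hsum hγ hδ using hsplit
  let e := p.support.equivFin
  set F : {a // a ∈ p.support} → MvP d :=
    fun s => monomial (γ s) (p.coeff s) * monomial (δ s) 1 with hF
  refine ⟨_, p.support.card,
    fun j => monomial (γ (e.symm j)) (p.coeff (e.symm j)),
    fun j => monomial (δ (e.symm j)) 1,
    fun j => isHomogeneous_monomial _ (hγ _),
    fun j => isHomogeneous_monomial _ (hδ _), ?_, rfl⟩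
  have h1 : ∑ j : Fin p.support.card, F (e.symm j) = ∑ s : {a // a ∈ p.support}, F s :=
    Equiv.sum_comp e.symm F
  calc p = ∑ α ∈ p.support, monomial α (p.coeff α) :=
        (MvPolynomial.support_sum_monomial_coeff p).symm
    _ = ∑ s ∈ p.support.attach, monomial (s : Fin d →₀ ℕ) (p.coeff s) :=
        (Finset.sum_attach _ _).symm
    _ = ∑ s : {a // a ∈ p.support}, F s := by
        rw [← Finset.univ_eq_attach]
        refine Finset.sum_congr rfl fun s _ => ?_
        rw [hF]
        simp only [MvPolynomial.monomial_mul, mul_one]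
        rw [← hsum s]
    _ = ∑ j : Fin p.support.card, F (e.symm j) := h1.symm

/-- existence of an `X`-decomposition for homogeneous polynomials of positive degree -/
lemma exists_X_decomp (hd : 1 ≤ d) {m : ℕ} {h : MvP d} (hh : h.IsHomogeneous (m + 1)) :
    ∃ f : Fin d → MvP d, (∀ i, (f i).IsHomogeneous m) ∧
      h = ∑ i, MvPolynomial.X i * f i := by
  classical
  set pick : (Fin d →₀ ℕ) → Fin d := fun β =>
    if hb : ∃ i : Fin d, β i ≠ 0 then hb.choose else ⟨0, hd⟩ with hpick
  have hpick_spec : ∀ β ∈ h.support, β (pick β) ≠ 0 := by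
    intro β hβ
    have hdeg : β.degree = m + 1 := isHomogeneous_coeff_degree hh hβ
    have hb : ∃ i : Fin d, β i ≠ 0 := exists_nonzero_coord (by omega)
    rw [hpick]
    simp only [hb, dif_pos]
    exact hb.choose_spec
  refine ⟨fun i => ∑ β ∈ h.support,
      if pick β = i then monomial (β - Finsupp.single i 1) (h.coeff β) else 0, ?_, ?_⟩
  · intro i
    refine MvPolynomial.IsHomogeneous.sum _ _ _ fun β hβ => ?_
    by_cases hpi : pick β = i
    · rw [if_pos hpi]
      refine isHomogeneous_monomial _ ?_
      have h1 : β (pick β) ≠ 0 := hpick_spec β hβ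
      rw [← hpi]
      have h2 := degree_sub_single h1
      have hdeg : β.degree = m + 1 := isHomogeneous_coeff_degree hh hβ
      omega
    · rw [if_neg hpi]
      exact MvPolynomial.isHomogeneous_zero _ _ _
  · have : ∀ i : Fin d, MvPolynomial.X i * (∑ β ∈ h.support,
        if pick β = i then monomial (β - Finsupp.single i 1) (h.coeff β) else 0)
        = ∑ β ∈ h.support,
          if pick β = i then MvPolynomial.X i * monomial (β - Finsupp.single i 1) (h.coeff β) else 0 := by
      intro i
      rw [Finset.mul_sum]
      exact Finset.sum_congr rfl fun β _ => by rw [mul_ite, mul_zero]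
    simp only [this]
    rw [Finset.sum_comm]
    conv_lhs => rw [← MvPolynomial.support_sum_monomial_coeff h]
    refine Finset.sum_congr rfl fun β hβ => ?_
    rw [Finset.sum_ite_eq Finset.univ (pick β)
      (fun i => MvPolynomial.X i * monomial (β - Finsupp.single i 1) (h.coeff β)),
      if_pos (Finset.mem_univ _)]
    rw [MvPolynomial.X, MvPolynomial.monomial_mul, one_mul, single_add_sub (hpick_spec β hβ)]

end Lemmas4
section Lemmas5
open MvPolynomial Finsupp Finset

lemma le_mul_csInf {A : Set ℝ} {c t : ℝ} (hA : A.Nonempty) (ht : 0 ≤ t)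
    (H : ∀ a ∈ A, c ≤ t * a) : c ≤ t * sInf A := by
  rcases eq_or_lt_of_le ht with h0 | h0
  · obtain ⟨a, ha⟩ := hA
    have := H a ha
    rw [← h0] at this ⊢
    simpa using this
  · have h1 : c / t ≤ sInf A := le_csInf hA fun a ha =>
      (div_le_iff₀' h0).mpr (H a ha)
    calc c = t * (c / t) := by field_simp
    _ ≤ t * sInf A := mul_le_mul_of_nonneg_left h1 ht

lemma csInf_le_mul_csInf {A C : Set ℝ} {t : ℝ} (hA : A.Nonempty) (ht : 0 ≤ t)
    (H : ∀ a ∈ A, sInf C ≤ t * a) : sInf C ≤ t * sInf A :=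
  le_mul_csInf hA ht H

lemma csInf_le_add_csInf {A B C : Set ℝ} (hA : A.Nonempty) (hB : B.Nonempty)
    (H : ∀ a ∈ A, ∀ b ∈ B, sInf C ≤ a + b) : sInf C ≤ sInf A + sInf B := by
  have h1 : ∀ a ∈ A, sInf C - a ≤ sInf B := fun a ha =>
    le_csInf hB (fun b hb => by linarith [H a ha b hb])
  have h2 : sInf C - sInf B ≤ sInf A :=
    le_csInf hA (fun a ha => by linarith [h1 a ha])
  linarith

variable {d k l : ℕ}

/-- the defining set of `wpNorm` -/
def wpS (d k l : ℕ) (p : MvP d) : Set ℝ :=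
  {x : ℝ | ∃ (m : ℕ) (f g : Fin m → MvP d),
    (∀ j, (f j).IsHomogeneous k) ∧ (∀ j, (g j).IsHomogeneous l) ∧
    p = ∑ j, f j * g j ∧ x = ∑ j, norm2 (f j) * norm2 (g j)}

lemma wpNorm_def (p : MvP d) : wpNorm d k l p = sInf (wpS d k l p) := rfl

lemma wpS_nonneg {p : MvP d} : ∀ x ∈ wpS d k l p, (0:ℝ) ≤ x := by
  rintro x ⟨m, f, g, _, _, _, rfl⟩
  exact Finset.sum_nonneg fun j _ => mul_nonneg (norm2_nonneg _) (norm2_nonneg _)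

lemma wpS_bddBelow (p : MvP d) : BddBelow (wpS d k l p) :=
  ⟨0, fun x hx => wpS_nonneg x hx⟩

lemma wpNorm_nonneg (p : MvP d) : 0 ≤ wpNorm d k l p :=
  Real.sInf_nonneg fun x hx => wpS_nonneg x hx

lemma wpNorm_le_of_mem {p : MvP d} {x : ℝ} (hx : x ∈ wpS d k l p) :
    wpNorm d k l p ≤ x := csInf_le (wpS_bddBelow p) hx

@[simp] lemma wpNorm_zero : wpNorm d k l 0 = 0 := by
  refine le_antisymm (wpNorm_le_of_mem ?_) (wpNorm_nonneg 0)
  exact ⟨0, Fin.elim0, Fin.elim0, fun j => j.elim0, fun j => j.elim0, by simp, by simp⟩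

lemma wpNorm_mul_le {u v : MvP d} (hu : u.IsHomogeneous k) (hv : v.IsHomogeneous l) :
    wpNorm d k l (u * v) ≤ norm2 u * norm2 v := by
  refine wpNorm_le_of_mem ⟨1, fun _ => u, fun _ => v, fun _ => hu, fun _ => hv, ?_, ?_⟩
  · simp
  · simp

lemma wpNorm_add_le {p q : MvP d} (hp : p.IsHomogeneous (k + l))
    (hq : q.IsHomogeneous (k + l)) :
    wpNorm d k l (p + q) ≤ wpNorm d k l p + wpNorm d k l q := by
  rw [wpNorm_def, wpNorm_def, wpNorm_def]
  refine csInf_le_add_csInf (wpSet_nonempty hp) (wpSet_nonempty hq) ?_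
  rintro a ⟨m, f, g, hf, hg, hpe, rfl⟩ b ⟨m', f', g', hf', hg', hqe, rfl⟩
  refine csInf_le (wpS_bddBelow _) ⟨m + m', Fin.append f f', Fin.append g g', ?_, ?_, ?_, ?_⟩
  · intro j
    refine Fin.addCases (fun j0 => ?_) (fun j0 => ?_) j
    · rw [Fin.append_left]; exact hf j0
    · rw [Fin.append_right]; exact hf' j0
  · intro j
    refine Fin.addCases (fun j0 => ?_) (fun j0 => ?_) j
    · rw [Fin.append_left]; exact hg j0
    · rw [Fin.append_right]; exact hg' j0
  · rw [Fin.sum_univ_add]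
    simp only [Fin.append_left, Fin.append_right]
    rw [hpe, hqe]
  · rw [Fin.sum_univ_add]
    simp only [Fin.append_left, Fin.append_right]

lemma wpNorm_smul_le (c : ℂ) {p : MvP d} (hp : p.IsHomogeneous (k + l)) :
    wpNorm d k l (c • p) ≤ ‖c‖ * wpNorm d k l p := by
  rw [wpNorm_def, wpNorm_def]
  refine csInf_le_mul_csInf (wpSet_nonempty hp) (norm_nonneg c) ?_
  rintro a ⟨m, f, g, hf, hg, hpe, rfl⟩
  have hmem : (∑ j : Fin m, norm2 (c • f j) * norm2 (g j)) ∈ wpS d k l (c • p) := by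
    refine ⟨m, fun j => c • f j, g, fun j => isHomogeneous_smul c (hf j), hg, ?_, rfl⟩
    rw [hpe, Finset.smul_sum]
    exact Finset.sum_congr rfl fun j _ => (smul_mul_assoc c (f j) (g j)).symm
  refine (csInf_le (wpS_bddBelow _) hmem).trans (le_of_eq ?_)
  rw [Finset.mul_sum]
  exact Finset.sum_congr rfl fun j _ => by rw [norm2_smul, mul_assoc]

/-- the defining set of `zwpNorm` -/
def zwpS (d k l : ℕ) (p : MvP d) : Set ℝ :=
  {x : ℝ | ∃ f : Fin d → MvP d,
    (∀ i, (f i).IsHomogeneous (k + l)) ∧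
    p = ∑ i, MvPolynomial.X i * f i ∧ x = ∑ i, wpNorm d k l (f i)}

lemma zwpNorm_def (p : MvP d) : zwpNorm d k l p = sInf (zwpS d k l p) := rfl

lemma zwpS_nonneg {p : MvP d} : ∀ x ∈ zwpS d k l p, (0:ℝ) ≤ x := by
  rintro x ⟨f, _, _, rfl⟩
  exact Finset.sum_nonneg fun i _ => wpNorm_nonneg _

lemma zwpS_bddBelow (p : MvP d) : BddBelow (zwpS d k l p) :=
  ⟨0, fun x hx => zwpS_nonneg x hx⟩

lemma zwpNorm_nonneg (p : MvP d) : 0 ≤ zwpNorm d k l p :=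
  Real.sInf_nonneg fun x hx => zwpS_nonneg x hx

lemma zwpNorm_le_of_mem {p : MvP d} {x : ℝ} (hx : x ∈ zwpS d k l p) :
    zwpNorm d k l p ≤ x := csInf_le (zwpS_bddBelow p) hx

lemma zwpS_nonempty (hd : 1 ≤ d) {h : MvP d} (hh : h.IsHomogeneous (k + l + 1)) :
    (zwpS d k l h).Nonempty := by
  obtain ⟨f, hf, hsum⟩ := exists_X_decomp hd hh
  exact ⟨_, f, hf, hsum, rfl⟩

@[simp] lemma zwpNorm_zero (hd : 1 ≤ d) : zwpNorm d k l 0 = 0 := by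
  refine le_antisymm (zwpNorm_le_of_mem ?_) (zwpNorm_nonneg 0)
  refine ⟨fun _ => 0, fun i => MvPolynomial.isHomogeneous_zero _ _ _, by simp, by simp⟩

lemma zwpNorm_X_mul_le {w : MvP d} (hw : w.IsHomogeneous (k + l)) (i : Fin d) :
    zwpNorm d k l (MvPolynomial.X i * w) ≤ wpNorm d k l w := by
  refine (zwpNorm_le_of_mem ⟨fun j => if j = i then w else 0,
    fun j => ?_, ?_, rfl⟩).trans (le_of_eq ?_)
  · dsimp only
    by_cases hj : j = i
    · rw [if_pos hj]; exact hw
    · rw [if_neg hj]; exact MvPolynomial.isHomogeneous_zero _ _ _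
  · rw [Finset.sum_congr rfl (fun j _ => by rw [mul_ite, mul_zero]),
      Finset.sum_ite_eq' Finset.univ i (fun j => MvPolynomial.X j * w),
      if_pos (Finset.mem_univ i)]
  · rw [Finset.sum_congr rfl (fun j (_ : j ∈ Finset.univ) => apply_ite (wpNorm d k l) (j = i) w 0),
      Finset.sum_congr rfl (fun j (_ : j ∈ Finset.univ) => by rw [wpNorm_zero]),
      Finset.sum_ite_eq' Finset.univ i (fun _ => wpNorm d k l w),
      if_pos (Finset.mem_univ i)]

lemma zwpNorm_add_le (hd : 1 ≤ d) {p q : MvP d} (hp : p.IsHomogeneous (k + l + 1))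
    (hq : q.IsHomogeneous (k + l + 1)) :
    zwpNorm d k l (p + q) ≤ zwpNorm d k l p + zwpNorm d k l q := by
  rw [zwpNorm_def, zwpNorm_def, zwpNorm_def]
  refine csInf_le_add_csInf (zwpS_nonempty hd hp) (zwpS_nonempty hd hq) ?_
  rintro a ⟨f, hf, hpe, rfl⟩ b ⟨f', hf', hqe, rfl⟩
  refine (csInf_le (zwpS_bddBelow _) ⟨fun i => f i + f' i,
    fun i => (hf i).add (hf' i), ?_, rfl⟩).trans ?_
  · rw [hpe, hqe, ← Finset.sum_add_distrib]
    exact Finset.sum_congr rfl fun i _ => by rw [mul_add]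
  · rw [← Finset.sum_add_distrib]
    exact Finset.sum_le_sum fun i _ => wpNorm_add_le (hf i) (hf' i)

lemma zwpNorm_smul_le (hd : 1 ≤ d) (c : ℂ) {p : MvP d}
    (hp : p.IsHomogeneous (k + l + 1)) :
    zwpNorm d k l (c • p) ≤ ‖c‖ * zwpNorm d k l p := by
  rw [zwpNorm_def, zwpNorm_def]
  refine csInf_le_mul_csInf (zwpS_nonempty hd hp) (norm_nonneg c) ?_
  rintro a ⟨f, hf, hpe, rfl⟩
  refine (csInf_le (zwpS_bddBelow _) ⟨fun i => c • f i,
    fun i => isHomogeneous_smul c (hf i), ?_, rfl⟩).trans ?_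
  · rw [hpe, Finset.smul_sum]
    exact Finset.sum_congr rfl fun i _ => (mul_smul_comm c _ _).symm
  · rw [Finset.mul_sum]
    exact Finset.sum_le_sum fun i _ => wpNorm_smul_le c (hf i)

lemma zwpNorm_smul (hd : 1 ≤ d) (c : ℂ) {p : MvP d}
    (hp : p.IsHomogeneous (k + l + 1)) :
    zwpNorm d k l (c • p) = ‖c‖ * zwpNorm d k l p := by
  rcases eq_or_ne c 0 with rfl | hc
  · simp [zwpNorm_zero hd]
  · refine le_antisymm (zwpNorm_smul_le hd c hp) ?_
    have h1 : zwpNorm d k l p ≤ ‖c‖⁻¹ * zwpNorm d k l (c • p) := by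
      have := zwpNorm_smul_le hd c⁻¹ (isHomogeneous_smul c hp)
      rw [smul_smul, inv_mul_cancel₀ hc, one_smul, norm_inv] at this
      exact this
    have hc' : 0 < ‖c‖ := norm_pos_iff.mpr hc
    calc ‖c‖ * zwpNorm d k l p ≤ ‖c‖ * (‖c‖⁻¹ * zwpNorm d k l (c • p)) :=
          mul_le_mul_of_nonneg_left h1 hc'.le
    _ = zwpNorm d k l (c • p) := by
          rw [← mul_assoc, mul_inv_cancel₀ (ne_of_gt hc'), one_mul]

lemma zwpNorm_neg (hd : 1 ≤ d) {p : MvP d} (hp : p.IsHomogeneous (k + l + 1)) :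
    zwpNorm d k l (-p) = zwpNorm d k l p := by
  have := zwpNorm_smul hd (-1 : ℂ) hp
  simpa using this

end Lemmas5
section Lemmas6
open MvPolynomial Finsupp Finset

local notation "conj'" => starRingEnd ℂ

variable {d n k : ℕ}

/-- the defining set of `hanNorm'` -/
def hanS (d n k : ℕ) (q : MvP d) : Set ℝ :=
  {x : ℝ | ∃ (i : Fin d) (f g : MvP d), f.IsHomogeneous k ∧
    g.IsHomogeneous (n - k - 1) ∧ norm2 f ≤ 1 ∧ norm2 g ≤ 1 ∧
    x = ‖pairing q (MvPolynomial.X i * hatp f * g)‖}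

lemma hanNorm'_def (q : MvP d) : hanNorm' d n k q = sSup (hanS d n k q) := rfl

lemma hanS_zero_mem (hd : 1 ≤ d) (q : MvP d) : (0:ℝ) ∈ hanS d n k q := by
  refine ⟨⟨0, hd⟩, 0, 0, MvPolynomial.isHomogeneous_zero _ _ _,
    MvPolynomial.isHomogeneous_zero _ _ _, by simp, by simp, ?_⟩
  simp

lemma hanS_bddAbove (q : MvP d) : BddAbove (hanS d n k q) := by
  classical
  refine ⟨L1 q * (Real.sqrt ((degF d k).card) * Real.sqrt ((degF d (n - k - 1)).card)), ?_⟩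
  rintro x ⟨i, f, g, hf, hg, hnf, hng, rfl⟩
  have h1 : ‖pairing q (MvPolynomial.X i * hatp f * g)‖ ≤
      L1 q * L1 (MvPolynomial.X i * hatp f * g) := norm_pairing_le_L1 _ _
  refine h1.trans (mul_le_mul_of_nonneg_left ?_ (L1_nonneg q))
  have h2 : L1 (MvPolynomial.X i * hatp f * g) ≤ L1 (MvPolynomial.X i * hatp f) * L1 g :=
    L1_mul_le _ _
  have h3 : L1 (MvPolynomial.X i * hatp f) ≤ L1 (MvPolynomial.X i : MvP d) * L1 (hatp f) :=
    L1_mul_le _ _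
  have h4 : L1 (MvPolynomial.X i : MvP d) * L1 (hatp f) ≤ 1 * L1 f := by
    rw [L1_hatp]
    exact mul_le_mul_of_nonneg_right (L1_X_le i) (L1_nonneg f)
  have h5 : L1 f ≤ Real.sqrt ((degF d k).card) * norm2 f := L1_le_of_homog hf
  have h6 : L1 g ≤ Real.sqrt ((degF d (n - k - 1)).card) * norm2 g := L1_le_of_homog hg
  have h7 : L1 f ≤ Real.sqrt ((degF d k).card) := by
    refine h5.trans ?_
    nlinarith [Real.sqrt_nonneg ((degF d k).card : ℝ), norm2_nonneg f]
  have h8 : L1 g ≤ Real.sqrt ((degF d (n - k - 1)).card) := by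
    refine h6.trans ?_
    nlinarith [Real.sqrt_nonneg ((degF d (n - k - 1)).card : ℝ), norm2_nonneg g]
  nlinarith [L1_nonneg (MvPolynomial.X i * hatp f), L1_nonneg g, L1_nonneg f,
    Real.sqrt_nonneg ((degF d k).card : ℝ), Real.sqrt_nonneg ((degF d (n - k - 1)).card : ℝ),
    L1_nonneg (MvPolynomial.X i * hatp f * g)]

lemma hanNorm'_nonneg (hd : 1 ≤ d) (q : MvP d) : 0 ≤ hanNorm' d n k q :=
  le_csSup (hanS_bddAbove q) (hanS_zero_mem hd q)

/-- core scaling estimate -/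
lemma norm_pairing_X_mul_le (q : MvP d) (i : Fin d) {u v : MvP d}
    (hu : u.IsHomogeneous k) (hv : v.IsHomogeneous (n - k - 1)) :
    ‖pairing q (MvPolynomial.X i * u * v)‖ ≤
      hanNorm' d n k q * (norm2 u * norm2 v) := by
  rcases eq_or_ne u 0 with rfl | hu0
  · simp
  rcases eq_or_ne v 0 with rfl | hv0
  · simp
  have ha : 0 < norm2 u := norm2_pos hu0
  have hb : 0 < norm2 v := norm2_pos hv0
  set a := norm2 u with haa
  set b := norm2 v with hbb
  set f : MvP d := ((a : ℂ))⁻¹ • hatp u with hfdef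
  set g : MvP d := ((b : ℂ))⁻¹ • v with hgdef
  have hfh : f.IsHomogeneous k := isHomogeneous_smul _ (hatp_isHomogeneous hu)
  have hgh : g.IsHomogeneous (n - k - 1) := isHomogeneous_smul _ hv
  have hnf : norm2 f = 1 := by
    rw [hfdef, norm2_smul, norm2_hatp, norm_inv, Complex.norm_real,
      Real.norm_of_nonneg ha.le, ← haa, inv_mul_cancel₀ (ne_of_gt ha)]
  have hng : norm2 g = 1 := by
    rw [hgdef, norm2_smul, norm_inv, Complex.norm_real,
      Real.norm_of_nonneg hb.le, ← hbb, inv_mul_cancel₀ (ne_of_gt hb)]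
  have hhatf : hatp f = ((a : ℂ))⁻¹ • u := by
    rw [hfdef, hatp_smul, hatp_hatp, map_inv₀, Complex.conj_ofReal]
  have hXw : MvPolynomial.X i * hatp f * g =
      (((a : ℂ))⁻¹ * ((b : ℂ))⁻¹) • (MvPolynomial.X i * u * v) := by
    rw [hhatf, hgdef]
    simp only [smul_mul_assoc, mul_smul_comm, smul_smul]
    rw [mul_comm]
  have hp : pairing q (MvPolynomial.X i * hatp f * g) =
      conj' (((a : ℂ))⁻¹ * ((b : ℂ))⁻¹) * pairing q (MvPolynomial.X i * u * v) := by
    rw [hXw, pairing_smul_right]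
  have hmem : ‖pairing q (MvPolynomial.X i * hatp f * g)‖ ∈ hanS d n k q :=
    ⟨i, f, g, hfh, hgh, le_of_eq hnf, le_of_eq hng, rfl⟩
  have hle : ‖pairing q (MvPolynomial.X i * hatp f * g)‖ ≤ hanNorm' d n k q :=
    le_csSup (hanS_bddAbove q) hmem
  have hval : ‖pairing q (MvPolynomial.X i * hatp f * g)‖ =
      (a⁻¹ * b⁻¹) * ‖pairing q (MvPolynomial.X i * u * v)‖ := by
    rw [hp, norm_mul, RCLike.norm_conj, norm_mul, norm_inv, norm_inv,
      Complex.norm_real, Complex.norm_real, Real.norm_of_nonneg ha.le,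
      Real.norm_of_nonneg hb.le]
  rw [hval] at hle
  have h2 : ‖pairing q (MvPolynomial.X i * u * v)‖ =
      (a * b) * ((a⁻¹ * b⁻¹) * ‖pairing q (MvPolynomial.X i * u * v)‖) := by
    field_simp
  rw [h2]
  calc (a * b) * ((a⁻¹ * b⁻¹) * ‖pairing q (MvPolynomial.X i * u * v)‖)
      ≤ (a * b) * hanNorm' d n k q :=
        mul_le_mul_of_nonneg_left hle (by positivity)
    _ = hanNorm' d n k q * (a * b) := by ring

/-- the pairing against `X i * f` is controlled by the weak product norm -/
lemma norm_pairing_X_f_le (hd : 1 ≤ d) (q : MvP d) (i : Fin d) {f : MvP d}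
    (hf : f.IsHomogeneous (k + (n - k - 1))) :
    ‖pairing q (MvPolynomial.X i * f)‖ ≤
      hanNorm' d n k q * wpNorm d k (n - k - 1) f := by
  rw [wpNorm_def]
  refine le_mul_csInf (wpSet_nonempty hf) (hanNorm'_nonneg hd q) ?_
  rintro x ⟨m, u, v, hu, hv, hfe, rfl⟩
  have hsum : MvPolynomial.X i * f = ∑ j : Fin m, MvPolynomial.X i * u j * v j := by
    rw [hfe, Finset.mul_sum]
    exact Finset.sum_congr rfl fun j _ => by ring
  rw [hsum, pairing_sum_right]
  refine (norm_sum_le _ _).trans ?_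
  rw [Finset.mul_sum]
  exact Finset.sum_le_sum fun j _ => norm_pairing_X_mul_le q i (hu j) (hv j)

/-- key inequality: |⟨h,q⟩| ≤ ‖h‖_{Z⊙..} ‖q‖'_{Han} -/
lemma ineqA (hd : 1 ≤ d) (hk : k + 1 ≤ n) (q : MvP d) {h : MvP d}
    (hh : h.IsHomogeneous n) :
    ‖pairing h q‖ ≤ zwpNorm d k (n - k - 1) h * hanNorm' d n k q := by
  have hn1 : k + (n - k - 1) + 1 = n := by omega
  rw [mul_comm, zwpNorm_def]
  refine le_mul_csInf (zwpS_nonempty hd (by rw [hn1]; exact hh))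
    (hanNorm'_nonneg hd q) ?_
  rintro x ⟨f, hf, hhe, rfl⟩
  rw [norm_pairing_comm, hhe, pairing_sum_right]
  refine (norm_sum_le _ _).trans ?_
  rw [Finset.mul_sum]
  exact Finset.sum_le_sum fun i _ => norm_pairing_X_f_le hd q i (hf i)

end Lemmas6
section Lemmas7
open MvPolynomial Finsupp Finset

local notation "conj'" => starRingEnd ℂ

variable {d n k : ℕ}

lemma pairing_self (p : MvP d) : pairing p p = ((norm2 p ^ 2 : ℝ) : ℂ) := by
  rw [pairing, norm2_sq]
  push_cast
  refine Finset.sum_congr rfl fun α _ => ?_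
  rw [Complex.mul_conj]
  norm_cast
  rw [Complex.normSq_eq_norm_sq]

lemma norm_pairing_self (p : MvP d) : ‖pairing p p‖ = norm2 p ^ 2 := by
  rw [pairing_self, Complex.norm_real, Real.norm_of_nonneg (by positivity)]

/-- Part 1 of the duality. -/
lemma duality_part1 (hd : 1 ≤ d) (hk : k + 1 ≤ n) {q : MvP d}
    (hq : q.IsHomogeneous n) :
    hanNorm' d n k q =
      sSup {x : ℝ | ∃ h : MvP d, h.IsHomogeneous n ∧
        zwpNorm d k (n - k - 1) h ≤ 1 ∧ x = ‖pairing h q‖} := by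
  set S' := {x : ℝ | ∃ h : MvP d, h.IsHomogeneous n ∧
    zwpNorm d k (n - k - 1) h ≤ 1 ∧ x = ‖pairing h q‖} with hS'
  have hS'0 : (0:ℝ) ∈ S' := by
    refine ⟨0, MvPolynomial.isHomogeneous_zero _ _ _, ?_, by simp⟩
    rw [zwpNorm_zero hd]; norm_num
  have hS'le : ∀ x ∈ S', x ≤ hanNorm' d n k q := by
    rintro x ⟨h, hh, hz, rfl⟩
    refine (ineqA hd hk q hh).trans ?_
    calc zwpNorm d k (n - k - 1) h * hanNorm' d n k q
        ≤ 1 * hanNorm' d n k q :=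
          mul_le_mul_of_nonneg_right hz (hanNorm'_nonneg hd q)
      _ = hanNorm' d n k q := one_mul _
  have hbdd' : BddAbove S' := ⟨hanNorm' d n k q, hS'le⟩
  refine le_antisymm ?_ (csSup_le ⟨0, hS'0⟩ hS'le)
  rw [hanNorm'_def]
  refine csSup_le ⟨0, hanS_zero_mem hd q⟩ ?_
  rintro x ⟨i, f, g, hf, hg, hnf, hng, rfl⟩
  refine le_csSup hbdd' ?_
  have hn1 : 1 + k + (n - k - 1) = n := by omega
  have hwh : (MvPolynomial.X i * hatp f * g).IsHomogeneous n := by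
    rw [← hn1]
    exact ((MvPolynomial.isHomogeneous_X _ i).mul (hatp_isHomogeneous hf)).mul hg
  refine ⟨MvPolynomial.X i * hatp f * g, hwh, ?_, (norm_pairing_comm _ _).symm⟩
  have hwp : (hatp f * g).IsHomogeneous (k + (n - k - 1)) :=
    (hatp_isHomogeneous hf).mul hg
  have h1 : zwpNorm d k (n - k - 1) (MvPolynomial.X i * (hatp f * g)) ≤
      wpNorm d k (n - k - 1) (hatp f * g) := zwpNorm_X_mul_le hwp i
  rw [← mul_assoc] at h1
  refine h1.trans ?_
  have h2 : wpNorm d k (n - k - 1) (hatp f * g) ≤ norm2 (hatp f) * norm2 g :=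
    wpNorm_mul_le (hatp_isHomogeneous hf) hg
  rw [norm2_hatp] at h2
  refine h2.trans ?_
  calc norm2 f * norm2 g ≤ 1 * 1 :=
        mul_le_mul hnf hng (norm2_nonneg g) zero_le_one
    _ = 1 := one_mul 1

end Lemmas7
section Lemmas8
open MvPolynomial Finsupp Finset

local notation "conj'" => starRingEnd ℂ

variable {d n k : ℕ}

/-- Part 2 of the duality. -/
lemma duality_part2 (hd : 1 ≤ d) (hk : k + 1 ≤ n) {h : MvP d}
    (hh : h.IsHomogeneous n) :
    zwpNorm d k (n - k - 1) h =
      sSup {x : ℝ | ∃ q : MvP d, q.IsHomogeneous n ∧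
        hanNorm' d n k q ≤ 1 ∧ x = ‖pairing h q‖} := by
  classical
  have hn1 : k + (n - k - 1) + 1 = n := by omega
  set S := {x : ℝ | ∃ q : MvP d, q.IsHomogeneous n ∧
    hanNorm' d n k q ≤ 1 ∧ x = ‖pairing h q‖} with hS
  have hS0 : (0:ℝ) ∈ S := by
    refine ⟨0, MvPolynomial.isHomogeneous_zero _ _ _, ?_, by simp⟩
    rw [hanNorm'_def]
    refine csSup_le ⟨0, hanS_zero_mem hd 0⟩ ?_
    rintro x ⟨i, f, g, _, _, _, _, rfl⟩
    simp
  have hSle : ∀ x ∈ S, x ≤ zwpNorm d k (n - k - 1) h := by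
    rintro x ⟨q, hq, hH, rfl⟩
    refine (ineqA hd hk q hh).trans ?_
    calc zwpNorm d k (n - k - 1) h * hanNorm' d n k q
        ≤ zwpNorm d k (n - k - 1) h * 1 :=
          mul_le_mul_of_nonneg_left hH (zwpNorm_nonneg h)
      _ = _ := mul_one _
  have hbddS : BddAbove S := ⟨_, hSle⟩
  refine le_antisymm ?_ (csSup_le ⟨0, hS0⟩ hSle)
  rcases eq_or_ne h 0 with rfl | hh0
  · rw [zwpNorm_zero hd]
    exact le_csSup hbddS hS0
  -- Hahn-Banach argument
  set W := MvPolynomial.homogeneousSubmodule (Fin d) ℂ n with hW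
  have hmemW : ∀ {p : MvP d}, p.IsHomogeneous n → p ∈ W := fun hp =>
    (MvPolynomial.mem_homogeneousSubmodule _ _).mpr hp
  have hWmem : ∀ x : W, (x : MvP d).IsHomogeneous n := fun x =>
    (MvPolynomial.mem_homogeneousSubmodule _ _).mp x.2
  have hWhom : ∀ x : W, (x : MvP d).IsHomogeneous (k + (n - k - 1) + 1) := fun x => by
    rw [hn1]; exact hWmem x
  have heqz : ∀ x : W, zwpNorm d k (n - k - 1) (x : MvP d) = 0 → x = 0 := by
    intro x hx0
    have h1 : ‖pairing (x : MvP d) (x : MvP d)‖ ≤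
        zwpNorm d k (n - k - 1) (x : MvP d) * hanNorm' d n k (x : MvP d) :=
      ineqA hd hk _ (hWmem x)
    rw [hx0, zero_mul, norm_pairing_self] at h1
    have h2 : norm2 (x : MvP d) = 0 := by nlinarith [norm2_nonneg (x : MvP d)]
    exact Subtype.ext (norm2_eq_zero h2)
  letI : NormedAddCommGroup W := AddGroupNorm.toNormedAddCommGroup
    { toFun := fun x => zwpNorm d k (n - k - 1) (x : MvP d)
      map_zero' := by simpa using zwpNorm_zero (d := d) (k := k) (l := n - k - 1) hd
      add_le' := fun x y => by
        simpa using zwpNorm_add_le hd (hWhom x) (hWhom y)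
      neg' := fun x => by
        simpa using zwpNorm_neg hd (hWhom x)
      eq_zero_of_map_eq_zero' := fun x hx => heqz x hx }
  letI : NormedSpace ℂ W :=
    { norm_smul_le := fun c x => by
        exact zwpNorm_smul_le hd c (hWhom x) }
  have hnorm : ∀ x : W, ‖x‖ = zwpNorm d k (n - k - 1) (x : MvP d) := fun _ => rfl
  have hhW : (⟨h, hmemW hh⟩ : W) ≠ 0 := fun h0 => hh0 (by
    simpa using congrArg (Subtype.val) h0)
  obtain ⟨g, hg1, hgx⟩ := exists_dual_vector ℂ (⟨h, hmemW hh⟩ : W) (norm_ne_zero_iff.mpr hhW)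
  -- construct the dual polynomial q0
  set mβ : (Fin d →₀ ℕ) → W := fun α =>
    if hα : α.degree = n then
      ⟨monomial α 1, hmemW (isHomogeneous_monomial 1 hα)⟩ else 0 with hmβ
  set Tn : Finset (Fin d →₀ ℕ) := (degF d n).filter (fun β => β.degree = n) with hTn
  have hTmem : ∀ {α : Fin d →₀ ℕ}, α.degree = n → α ∈ Tn := by
    intro α hα
    rw [hTn, Finset.mem_filter]
    exact ⟨by simp [degF, Set.Finite.mem_toFinset, hα.le], hα⟩
  set q0 : MvP d := ∑ β ∈ Tn, monomial β (conj' (g (mβ β))) with hq0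
  have hq0h : q0.IsHomogeneous n := by
    refine MvPolynomial.IsHomogeneous.sum _ _ _ fun β hβ => ?_
    exact isHomogeneous_monomial _ ((Finset.mem_filter.mp hβ).2)
  have hcoeffq0 : ∀ {α : Fin d →₀ ℕ}, α.degree = n →
      q0.coeff α = conj' (g (mβ α)) := by
    intro α hα
    rw [hq0, MvPolynomial.coeff_sum]
    rw [Finset.sum_congr rfl (fun β (_ : β ∈ Tn) => MvPolynomial.coeff_monomial α β _),
      Finset.sum_ite_eq' Tn α (fun β => conj' (g (mβ β))), if_pos (hTmem hα)]
  have hkey : ∀ (p : MvP d) (hp : p.IsHomogeneous n),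
      pairing p q0 = g ⟨p, hmemW hp⟩ := by
    intro p hp
    have hsupp : ∀ α ∈ p.support, α.degree = n := fun α hα =>
      isHomogeneous_coeff_degree hp hα
    have h1 : pairing p q0 = ∑ α ∈ p.support, p.coeff α * g (mβ α) := by
      rw [pairing]
      refine Finset.sum_congr rfl fun α hα => ?_
      rw [hcoeffq0 (hsupp α hα), Complex.conj_conj]
    have h3 : ∑ α ∈ p.support, p.coeff α * g (mβ α) =
        g (∑ α ∈ p.support, p.coeff α • mβ α) := by
      rw [map_sum]
      exact Finset.sum_congr rfl fun α _ => by rw [map_smul, smul_eq_mul]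
    rw [h1, h3]
    congr 1
    refine Subtype.ext ?_
    rw [Submodule.coe_sum]
    have h2 : ∀ α ∈ p.support, ((p.coeff α • mβ α : W) : MvP d)
        = monomial α (p.coeff α) := by
      intro α hα
      have hα' := hsupp α hα
      rw [hmβ]
      simp only [dif_pos hα']
      rw [Submodule.coe_smul]
      simp only [MvPolynomial.smul_monomial, smul_eq_mul, mul_one]
    rw [Finset.sum_congr rfl h2, MvPolynomial.support_sum_monomial_coeff]
  -- hanNorm' q0 ≤ 1
  have hq0le : hanNorm' d n k q0 ≤ 1 := by
    rw [duality_part1 hd hk hq0h]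
    refine csSup_le ⟨0, 0, MvPolynomial.isHomogeneous_zero _ _ _, by
      rw [zwpNorm_zero hd]; norm_num, by simp⟩ ?_
    rintro x ⟨h', hh', hz', rfl⟩
    rw [hkey h' hh']
    calc ‖g ⟨h', hmemW hh'⟩‖ ≤ ‖g‖ * ‖(⟨h', hmemW hh'⟩ : W)‖ := g.le_opNorm _
      _ = zwpNorm d k (n - k - 1) h' := by rw [hg1, one_mul, hnorm]
      _ ≤ 1 := hz'
  -- the value of the pairing
  have hval : ‖pairing h q0‖ = zwpNorm d k (n - k - 1) h := by
    rw [hkey h hh, hgx, RCLike.norm_ofReal, abs_of_nonneg (norm_nonneg _), hnorm]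
  refine le_csSup hbddS ?_
  exact ⟨q0, hq0h, hq0le, hval.symm⟩

end Lemmas8
/-- Lemma 2.1 (2): duality of `‖·‖'_{Han_k}` and `‖·‖_{Z_d ⊙ P_{d,k} ⊙ P_{d,n-k-1}}`
on `P_{d,n}` with respect to the Cauchy pairing. -/
theorem hankel'_zWeakProduct_duality (d n k : ℕ) (hd : 1 ≤ d) (hk : k + 1 ≤ n) :
    (∀ q : MvP d, q.IsHomogeneous n →
      hanNorm' d n k q =
        sSup {x : ℝ | ∃ h : MvP d, h.IsHomogeneous n ∧
          zwpNorm d k (n - k - 1) h ≤ 1 ∧ x = ‖pairing h q‖}) ∧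
    (∀ h : MvP d, h.IsHomogeneous n →
      zwpNorm d k (n - k - 1) h =
        sSup {x : ℝ | ∃ q : MvP d, q.IsHomogeneous n ∧
          hanNorm' d n k q ≤ 1 ∧ x = ‖pairing h q‖}) :=
  ⟨fun _q hq => duality_part1 hd hk hq, fun _h hh => duality_part2 hd hk hh⟩

end WP
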